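/- A vector field u ∈ L²_vec(ν) is orthogonal to L²_∇(ν) if and only if its divergence vanishes ν-almost surely, i.e., (Lu)(κ) := Σ_{b∈B} [κ_b u(κ,b) - (τ_{-b}κ)_b u(τ_{-b}κ, b)] = 0 for ν-a.e. κ. -/

import Mathlib

set_option maxHeartbeats 1000000
set_option synthInstance.maxHeartbeats 200000


open MeasureTheory Real Filter ProbabilityTheory
open scoped ENNReal

noncomputable section

variable {d : ℕ}
/-- Positively oriented edges of `ℤ^d`: a base point together with a direction. -/
abbrev EdgeZ (d : ℕ) := ((Fin d → ℤ) × Fin d)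

/-- Configurations indexed by (positively oriented) edges: gradients or conductances. -/
abbrev Cfg (d : ℕ) := EdgeZ d → ℝ

/-- `sv j n` is `n` times the `j`-th coordinate unit vector of `ℤ^d`. -/
def sv (j : Fin d) (n : ℤ) : Fin d → ℤ := fun i => if i = j then n else 0

/-- Shift of a configuration by a lattice vector `x`. -/
def shf (x : Fin d → ℤ) (κ : Cfg d) : Cfg d := fun e => κ (e.1 + x, e.2)

/-- Translation invariance of a measure on configurations. -/
def TInv (ν : Measure (Cfg d)) : Prop := ∀ x, ν.map (shf x) = ν

/-- Ergodicity with respect to the group of lattice shifts. -/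
def Erg (ν : Measure (Cfg d)) : Prop :=
  ∀ A : Set (Cfg d), MeasurableSet A → (∀ x, shf x ⁻¹' A = A) → ν A = 0 ∨ ν A = 1

/-- Uniform ellipticity: `ε ≤ κ_b ≤ 1/ε` almost surely. -/
def Elliptic (ν : Measure (Cfg d)) : Prop :=
  ∃ ε : ℝ, 0 < ε ∧ ∀ᵐ κ ∂ν, ∀ e, ε ≤ κ e ∧ κ e ≤ 1 / ε
/-- A local function of the environment: depends on finitely many edges. -/
def IsLocal (h : Cfg d → ℝ) : Prop :=
  ∃ S : Finset (EdgeZ d), ∀ κ κ' : Cfg d, (∀ e ∈ S, κ e = κ' e) → h κ = h κ'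

/-- The gradient `(∇h)_j = h ∘ τ_{ê_j} - h` of a function of the environment. -/
def grad (h : Cfg d → ℝ) : Cfg d → Fin d → ℝ :=
  fun κ j => h (shf (sv j 1) κ) - h κ

/-- The `L²_vec(ν)` inner product `(u,v) = E_ν[Σ_b κ_b u(κ,b) v(κ,b)]`. -/
def ivec (ν : Measure (Cfg d)) (u v : Cfg d → Fin d → ℝ) : ℝ :=
  ∫ κ, ∑ j, κ (0, j) * u κ j * v κ j ∂ν

/-- Square integrability with respect to `ν`. -/
def SqInt (ν : Measure (Cfg d)) (h : Cfg d → ℝ) : Prop :=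
  ∫⁻ κ, ENNReal.ofReal ((h κ) ^ 2) ∂ν < ⊤

/-- Membership in `L²_vec(ν)`: measurable components, each square integrable. -/
def MemL2vec (ν : Measure (Cfg d)) (u : Cfg d → Fin d → ℝ) : Prop :=
  (∀ j, Measurable fun κ => u κ j) ∧ ∀ j, SqInt ν fun κ => u κ j

/-- Membership in `L²_∇(ν)`, the closure in the `L²_vec(ν)` norm of gradients of
local functions. -/
def MemGradClos (ν : Measure (Cfg d)) (u : Cfg d → Fin d → ℝ) : Prop :=
  ∀ δ : ℝ, 0 < δ → ∃ h : Cfg d → ℝ, IsLocal h ∧ Measurable h ∧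
    ∫⁻ κ, ENNReal.ofReal (∑ j, κ (0, j) * (u κ j - grad h κ j) ^ 2) ∂ν
      < ENNReal.ofReal δ

/-- The extension of a vector field to negative directions: `u(κ,-b) = -u(τ_{-b}κ, b)`.
A signed step is a pair `(j, s)` with `s = true` for `+ê_j`, `false` for `-ê_j`. -/
def uExt (u : Cfg d → Fin d → ℝ) (κ : Cfg d) (s : Fin d × Bool) : ℝ :=
  if s.2 then u κ s.1 else -u (shf (-sv s.1 1) κ) s.1

/-- The lattice displacement of a signed step. -/
def stepOf (s : Fin d × Bool) : Fin d → ℤ :=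
  if s.2 then sv s.1 1 else -sv s.1 1

/-- The sum of a vector field along a nearest-neighbor path started at the origin,
written in environment coordinates. -/
def pathSum (u : Cfg d → Fin d → ℝ) : Cfg d → List (Fin d × Bool) → ℝ
  | _, [] => 0
  | κ, s :: r => uExt u κ s + pathSum u (shf (stepOf s) κ) r

/-- The cycle condition: the sum of the field along every closed nearest-neighbor
loop vanishes. -/
def CycleCond (u : Cfg d → Fin d → ℝ) (κ : Cfg d) : Prop :=
  ∀ ℓ : List (Fin d × Bool), (ℓ.map stepOf).sum = 0 → pathSum u κ ℓ = 0

/-- The divergence `(Lu)(κ) = Σ_b [κ_b u(κ,b) - (τ_{-b}κ)_b u(τ_{-b}κ,b)]`. -/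
def divg (u : Cfg d → Fin d → ℝ) (κ : Cfg d) : ℝ :=
  ∑ j, (κ (0, j) * u κ j
    - shf (-sv j 1) κ (0, j) * u (shf (-sv j 1) κ) j)

/-! ### Auxiliary lemmas -/

lemma measurable_shf (x : Fin d → ℤ) : Measurable (shf x : Cfg d → Cfg d) :=
  measurable_pi_lambda _ fun e => measurable_pi_apply _

lemma shf_shf (x y : Fin d → ℤ) (κ : Cfg d) : shf x (shf y κ) = shf (x + y) κ := by
  funext e; simp [shf, add_assoc]

lemma shf_zero (κ : Cfg d) : shf (0 : Fin d → ℤ) κ = κ := by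
  funext e; simp [shf]

lemma measurePreserving_shf {ν : Measure (Cfg d)} (hTI : TInv ν) (x : Fin d → ℤ) :
    MeasurePreserving (shf x : Cfg d → Cfg d) ν ν :=
  ⟨measurable_shf x, hTI x⟩

lemma integral_shf {ν : Measure (Cfg d)} (hTI : TInv ν) (x : Fin d → ℤ)
    {f : Cfg d → ℝ} (hf : AEStronglyMeasurable f ν) :
    ∫ κ, f (shf x κ) ∂ν = ∫ κ, f κ ∂ν := by
  have h2 : AEStronglyMeasurable f (ν.map (shf x)) := by rw [hTI x]; exact hf
  conv_rhs => rw [← hTI x]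
  rw [integral_map (measurable_shf x).aemeasurable h2]

lemma memℒp_two_of_sqInt {ν : Measure (Cfg d)} {h : Cfg d → ℝ}
    (hm : Measurable h) (hs : SqInt ν h) : MemLp h 2 ν := by
  rw [memLp_two_iff_integrable_sq hm.aestronglyMeasurable]
  refine ⟨(hm.pow_const 2).aestronglyMeasurable, ?_⟩
  rw [hasFiniteIntegral_iff_norm]
  have he : ∀ κ, ENNReal.ofReal ‖h κ ^ 2‖ = ENNReal.ofReal (h κ ^ 2) := fun κ => by
    rw [Real.norm_eq_abs, abs_of_nonneg (sq_nonneg _)]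
  rw [lintegral_congr he]
  exact hs

lemma integrable_mul_L2 {ν : Measure (Cfg d)} {f g : Cfg d → ℝ}
    (hf : MemLp f 2 ν) (hg : MemLp g 2 ν) :
    Integrable (fun κ => f κ * g κ) ν := by
  have h12 : (1 : ℝ≥0∞) / 1 = 1 / 2 + 1 / 2 := by
    rw [ENNReal.div_add_div_same, one_div_one, one_add_one_eq_two,
      ENNReal.div_self (by norm_num) ENNReal.ofNat_ne_top]
  have := hg.smul (φ := f) (r := 1) hf
  exact memLp_one_iff_integrable.mp this

/-- The field `v_j(κ) = κ_{(0,j)} u(κ,j)`. -/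
def vf (u : Cfg d → Fin d → ℝ) (j : Fin d) (κ : Cfg d) : ℝ := κ (0, j) * u κ j

lemma divg_eq (u : Cfg d → Fin d → ℝ) (κ : Cfg d) :
    divg u κ = ∑ j, (vf u j κ - vf u j (shf (-sv j 1) κ)) := rfl

lemma measurable_vf {u : Cfg d → Fin d → ℝ}
    (hum : ∀ j, Measurable fun κ => u κ j) (j : Fin d) : Measurable (vf u j) :=
  (measurable_pi_apply _).mul (hum j)

lemma memℒp_vf {ν : Measure (Cfg d)} [IsProbabilityMeasure ν]
    {u : Cfg d → Fin d → ℝ} (hu : MemL2vec ν u)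
    {ε : ℝ} (hε : 0 < ε) (hae : ∀ᵐ κ ∂ν, ∀ e, ε ≤ κ e ∧ κ e ≤ 1 / ε) (j : Fin d) :
    MemLp (vf u j) 2 ν := by
  refine MemLp.of_le_mul (c := 1 / ε) (memℒp_two_of_sqInt (hu.1 j) (hu.2 j))
    ((measurable_vf hu.1 j).aestronglyMeasurable) ?_
  filter_upwards [hae] with κ hκ
  have h1 := (hκ (0, j)).1
  have h2 := (hκ (0, j)).2
  have h0 : (0 : ℝ) ≤ κ (0, j) := hε.le.trans h1
  rw [Real.norm_eq_abs, Real.norm_eq_abs, vf, abs_mul, abs_of_nonneg h0]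
  exact mul_le_mul_of_nonneg_right h2 (abs_nonneg _)

/-- The key identity: `(u, ∇h) = -∫ h ⋅ Lu`. -/
lemma key_identity {ν : Measure (Cfg d)} [IsProbabilityMeasure ν]
    (hTI : TInv ν) {u : Cfg d → Fin d → ℝ} (hu : MemL2vec ν u)
    {ε : ℝ} (hε : 0 < ε) (hae : ∀ᵐ κ ∂ν, ∀ e, ε ≤ κ e ∧ κ e ≤ 1 / ε)
    (h : Cfg d → ℝ) (hm : Measurable h) (hh2 : MemLp h 2 ν) :
    ivec ν u (grad h) = - ∫ κ, h κ * divg u κ ∂ν := by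
  have hvL2 : ∀ j, MemLp (vf u j) 2 ν := memℒp_vf hu hε hae
  have hvL2s : ∀ j : Fin d, ∀ x, MemLp (fun κ => vf u j (shf x κ)) 2 ν := fun j x =>
    (hvL2 j).comp_measurePreserving (measurePreserving_shf hTI x)
  have hhs : ∀ x, MemLp (fun κ => h (shf x κ)) 2 ν := fun x =>
    hh2.comp_measurePreserving (measurePreserving_shf hTI x)
  have intA : ∀ j : Fin d, Integrable (fun κ => vf u j κ * h (shf (sv j 1) κ)) ν :=
    fun j => integrable_mul_L2 (hvL2 j) (hhs _)
  have intB : ∀ j : Fin d, Integrable (fun κ => vf u j κ * h κ) ν :=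
    fun j => integrable_mul_L2 (hvL2 j) hh2
  have intC : ∀ j : Fin d, Integrable (fun κ => vf u j (shf (-sv j 1) κ) * h κ) ν :=
    fun j => integrable_mul_L2 (hvL2s j _) hh2
  have changeVar : ∀ j : Fin d,
      ∫ κ, vf u j κ * h (shf (sv j 1) κ) ∂ν
        = ∫ κ, vf u j (shf (-sv j 1) κ) * h κ ∂ν := by
    intro j
    have h1 := integral_shf hTI (sv j 1) (intC j).aestronglyMeasurable
    rw [← h1]
    congr 1; funext κ
    simp only [shf_shf, neg_add_cancel, shf_zero]
  have lhs : ivec ν u (grad h)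
      = ∑ j, (∫ κ, vf u j κ * h (shf (sv j 1) κ) ∂ν - ∫ κ, vf u j κ * h κ ∂ν) := by
    have e : (fun κ : Cfg d => ∑ j, κ (0, j) * u κ j * grad h κ j)
        = fun κ => ∑ j, (vf u j κ * h (shf (sv j 1) κ) - vf u j κ * h κ) := by
      funext κ
      exact Finset.sum_congr rfl fun j _ => by simp only [grad, vf]; ring
    have intAB : ∀ j : Fin d,
        Integrable (fun κ => vf u j κ * h (shf (sv j 1) κ) - vf u j κ * h κ) ν :=
      fun j => (intA j).sub (intB j)
    rw [ivec, e, integral_finset_sum _ fun j _ => intAB j]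
    exact Finset.sum_congr rfl fun j _ => integral_sub (intA j) (intB j)
  have rhs : ∫ κ, h κ * divg u κ ∂ν
      = ∑ j, (∫ κ, vf u j κ * h κ ∂ν - ∫ κ, vf u j (shf (-sv j 1) κ) * h κ ∂ν) := by
    have e : (fun κ : Cfg d => h κ * divg u κ)
        = fun κ => ∑ j, (vf u j κ * h κ - vf u j (shf (-sv j 1) κ) * h κ) := by
      funext κ
      rw [divg_eq, Finset.mul_sum]
      exact Finset.sum_congr rfl fun j _ => by ring
    have intBC : ∀ j : Fin d,
        Integrable (fun κ => vf u j κ * h κ - vf u j (shf (-sv j 1) κ) * h κ) ν :=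
      fun j => (intB j).sub (intC j)
    rw [e, integral_finset_sum _ fun j _ => intBC j]
    exact Finset.sum_congr rfl fun j _ => integral_sub (intB j) (intC j)
  rw [lhs, rhs, ← Finset.sum_neg_distrib]
  exact Finset.sum_congr rfl fun j _ => by rw [changeVar j]; ring

lemma integrable_divg {ν : Measure (Cfg d)} [IsProbabilityMeasure ν]
    (hTI : TInv ν) {u : Cfg d → Fin d → ℝ} (hu : MemL2vec ν u)
    {ε : ℝ} (hε : 0 < ε) (hae : ∀ᵐ κ ∂ν, ∀ e, ε ≤ κ e ∧ κ e ≤ 1 / ε) :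
    Integrable (divg u) ν := by
  have hvL2 : ∀ j, MemLp (vf u j) 2 ν := memℒp_vf hu hε hae
  have : Integrable (fun κ => ∑ j, (vf u j κ - vf u j (shf (-sv j 1) κ))) ν := by
    refine integrable_finset_sum _ fun j _ => Integrable.sub ?_ ?_
    · exact (hvL2 j).integrable one_le_two
    · exact (((hvL2 j).comp_measurePreserving
        (measurePreserving_shf hTI (-sv j 1))).integrable one_le_two)
  exact this

/-- Lemma on divergence-free fields.
A vector field `u ∈ L²_vec(ν)` is orthogonal to `L²_∇(ν)` (equivalently, to every
gradient of a square-integrable local function) if and only if its divergence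
vanishes `ν`-almost surely. -/
theorem orthogonal_iff_divergence_free
    (ν : Measure (Cfg d)) [IsProbabilityMeasure ν]
    (hTI : TInv ν) (hEll : Elliptic ν)
    (u : Cfg d → Fin d → ℝ) (hu : MemL2vec ν u) :
    (∀ h : Cfg d → ℝ, IsLocal h → Measurable h → SqInt ν h →
        ivec ν u (grad h) = 0)
      ↔ (∀ᵐ κ ∂ν, divg u κ = 0) := by
  classical
  obtain ⟨ε, hε, hae⟩ := hEll
  have hDint : Integrable (divg u) ν := integrable_divg hTI hu hε hae
  constructor
  · intro horth
    -- for every local, measurable, square-integrable `h`, `∫ h ⋅ Lu = 0`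
    have hDzero : ∀ h : Cfg d → ℝ, IsLocal h → Measurable h → SqInt ν h →
        ∫ κ, h κ * divg u κ ∂ν = 0 := by
      intro h hl hm hs
      have h0 := horth h hl hm hs
      rw [key_identity hTI hu hε hae h hm (memℒp_two_of_sqInt hm hs)] at h0
      linarith
    -- total integral of the divergence vanishes
    have htot : ∫ κ, divg u κ ∂ν = 0 := by
      have h1 : IsLocal (fun _ : Cfg d => (1 : ℝ)) := ⟨∅, fun _ _ _ => rfl⟩
      have hsq : SqInt ν (fun _ : Cfg d => (1 : ℝ)) := by
        simp [SqInt]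
      have := hDzero _ h1 measurable_const hsq
      simpa using this
    -- set integrals over all measurable sets vanish, via the π-system of cylinders
    have hgen : (inferInstance : MeasurableSpace (Cfg d))
        = MeasurableSpace.generateFrom (measurableCylinders fun _ : EdgeZ d => ℝ) :=
      generateFrom_measurableCylinders.symm
    have hset : ∀ ⦃A : Set (Cfg d)⦄, MeasurableSet A → ∫ κ in A, divg u κ ∂ν = 0 := by
      refine MeasurableSpace.induction_on_inter hgen (isPiSystem_measurableCylinders (α := fun _ : EdgeZ d => ℝ))
        (by simp) ?_ ?_ ?_
      · -- cylinders
        intro t ht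
        obtain ⟨S, B, hB, rfl⟩ := (mem_measurableCylinders t).mp ht
        set h : Cfg d → ℝ := (cylinder S B).indicator (fun _ => (1 : ℝ)) with hh
        have hmemiff : ∀ κ κ' : Cfg d, (∀ e ∈ S, κ e = κ' e) →
            (κ ∈ cylinder S B ↔ κ' ∈ cylinder S B) := by
          intro κ κ' hEq
          have hres : S.restrict κ = S.restrict κ' := funext fun i => hEq i i.2
          rw [mem_cylinder, mem_cylinder, hres]
        have hloc : IsLocal h := by
          refine ⟨S, fun κ κ' hEq => ?_⟩
          by_cases hmem : κ ∈ cylinder S B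
          · have hmem' : κ' ∈ cylinder S B := (hmemiff κ κ' hEq).mp hmem
            rw [hh, Set.indicator_of_mem hmem, Set.indicator_of_mem hmem']
          · have hmem' : κ' ∉ cylinder S B := fun hc => hmem ((hmemiff κ κ' hEq).mpr hc)
            rw [hh, Set.indicator_of_notMem hmem, Set.indicator_of_notMem hmem']
        have hcylm : MeasurableSet (cylinder S B) :=
          MeasurableSet.cylinder (α := fun _ : EdgeZ d => ℝ) S hB
        have hmeas : Measurable h := measurable_const.indicator hcylm
        have hsq : SqInt ν h := by
          refine lt_of_le_of_lt (lintegral_mono (g := fun _ => 1) fun κ => ?_) ?_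
          · by_cases hmem : κ ∈ cylinder S B
            · simp [hh, Set.indicator_of_mem hmem]
            · simp [hh, Set.indicator_of_notMem hmem]
          · simp
        have h0 := hDzero h hloc hmeas hsq
        have hind : (fun κ => h κ * divg u κ) = (cylinder S B).indicator (divg u) := by
          funext κ
          by_cases hmem : κ ∈ cylinder S B
          · simp [hh, Set.indicator_of_mem hmem]
          · simp [hh, Set.indicator_of_notMem hmem]
        rw [hind] at h0
        rwa [← integral_indicator hcylm]
      · -- complements
        intro t ht h0
        have := integral_add_compl ht hDint
        rw [h0, zero_add] at this
        rw [this, htot]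
      · -- countable disjoint unions
        intro f hdisj hfm h0
        rw [integral_iUnion hfm hdisj hDint.integrableOn]
        simp [h0]
    have := hDint.ae_eq_zero_of_forall_setIntegral_eq_zero fun s hs _ => hset hs
    filter_upwards [this] with κ hκ
    exact hκ
  · intro hD h hl hm hs
    rw [key_identity hTI hu hε hae h hm (memℒp_two_of_sqInt hm hs)]
    have : ∫ κ, h κ * divg u κ ∂ν = 0 := by
      refine integral_eq_zero_of_ae ?_
      filter_upwards [hD] with κ hκ
      simp [hκ]
    rw [this, neg_zero]
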